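/- Existence of an i-FOCS basis (assuming the real canonical form): let A, H be real n×n matrices with H symmetric invertible and A H-selfadjoint, and suppose there exists a real invertible R with R^{-1} A R = J_R and R^T H R = P (the real canonical form). Then there exists a complex invertible N with N^{-1} A N = J (the complex Jordan form with conjugate blocks paired), N* H N = P, and N is i-conjugate symmetric: for each non-real block, the Jordan chain at conj(λ) is i times the entrywise conjugate of the Jordan chain at λ. -/

import Mathlib

open Matrix Complex

/-- Index type for a canonical form with `α` real Jordan blocks of sizes `p k`
and `β'` pairs of non-real conjugate blocks, each pair of total size `2 * q k`. -/
abbrev JordanIdx (α β' : ℕ) (p : Fin α → ℕ) (q : Fin β' → ℕ) : Type :=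
  (Σ k : Fin α, Fin (p k)) ⊕ (Σ k : Fin β', Fin (2 * q k))

/-- The real Jordan canonical form `J_R`: real Jordan blocks `J(μ k)` followed by real
canonical blocks built from `2×2` blocks `[[σ,τ],[-τ,σ]]` with identity superdiagonal. -/
noncomputable def realJordanForm (α β' : ℕ) (p : Fin α → ℕ) (q : Fin β' → ℕ)
    (μ : Fin α → ℝ) (lam : Fin β' → ℂ) :
    Matrix (JordanIdx α β' p q) (JordanIdx α β' p q) ℂ :=
  Matrix.of fun i j =>
    match i, j with
    | Sum.inl ⟨k, i⟩, Sum.inl ⟨k', i'⟩ =>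
        if k = k' ∧ (i':ℕ) = (i:ℕ) then (μ k : ℂ)
        else if k = k' ∧ (i':ℕ) = (i:ℕ)+1 then 1 else 0
    | Sum.inr ⟨k, i⟩, Sum.inr ⟨k', i'⟩ =>
        if k = k' then
          (if (i':ℕ) = (i:ℕ) then ((lam k).re : ℂ)
           else if (i:ℕ) % 2 = 0 ∧ (i':ℕ) = (i:ℕ)+1 then ((lam k).im : ℂ)
           else if (i:ℕ) % 2 = 1 ∧ (i':ℕ)+1 = (i:ℕ) then -((lam k).im : ℂ)
           else if (i':ℕ) = (i:ℕ)+2 then 1 else 0)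
        else 0
    | _, _ => 0

/-- The complex Jordan canonical form `J`: Jordan blocks `J(μ k)` at the real eigenvalues,
and for each non-real `lam k` the pair `J(lam k) ⊕ J(conj (lam k))` of blocks of size `q k`. -/
noncomputable def complexJordanForm (α β' : ℕ) (p : Fin α → ℕ) (q : Fin β' → ℕ)
    (μ : Fin α → ℝ) (lam : Fin β' → ℂ) :
    Matrix (JordanIdx α β' p q) (JordanIdx α β' p q) ℂ :=
  Matrix.of fun i j =>
    match i, j with
    | Sum.inl ⟨k, i⟩, Sum.inl ⟨k', i'⟩ =>
        if k = k' ∧ (i':ℕ) = (i:ℕ) then (μ k : ℂ)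
        else if k = k' ∧ (i':ℕ) = (i:ℕ)+1 then 1 else 0
    | Sum.inr ⟨k, i⟩, Sum.inr ⟨k', i'⟩ =>
        if k = k' then
          (if (i':ℕ) = (i:ℕ) then (if (i:ℕ) < q k then lam k else (starRingEnd ℂ) (lam k))
           else if (i':ℕ) = (i:ℕ)+1 ∧ (i:ℕ)+1 ≠ q k then 1 else 0)
        else 0
    | _, _ => 0

/-- The matrix `P`: a direct sum of sip matrices `ε k • ĩ` (for the real blocks)
and sip matrices `ĩ` (for the pairs of non-real conjugate blocks). -/
noncomputable def sipForm (α β' : ℕ) (p : Fin α → ℕ) (q : Fin β' → ℕ) (ε : Fin α → ℝ) :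
    Matrix (JordanIdx α β' p q) (JordanIdx α β' p q) ℂ :=
  Matrix.of fun i j =>
    match i, j with
    | Sum.inl ⟨k, i⟩, Sum.inl ⟨k', i'⟩ =>
        if k = k' ∧ (i:ℕ) + (i':ℕ) = p k - 1 then (ε k : ℂ) else 0
    | Sum.inr ⟨k, i⟩, Sum.inr ⟨k', i'⟩ =>
        if k = k' ∧ (i:ℕ) + (i':ℕ) = 2 * q k - 1 then 1 else 0
    | _, _ => 0

/-- natural-number level index functions -/
def sigN (m c : ℕ) : ℕ := if c < m then 2*c else 2*(c-m)+1
def sigIN (m r : ℕ) : ℕ := if r % 2 = 0 then r/2 else m + r/2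
def tauN (m c : ℕ) : ℕ := if c < m then c + m else c - m
def rhoN (m c : ℕ) : ℕ := 2*m - 1 - c

def sigF (m : ℕ) : Fin (2*m) → Fin (2*m) := fun c => ⟨sigN m c.val, by
  have := c.isLt; unfold sigN; split <;> omega⟩
def sigIF (m : ℕ) : Fin (2*m) → Fin (2*m) := fun r => ⟨sigIN m r.val, by
  have := r.isLt; unfold sigIN; split <;> omega⟩
def tauF (m : ℕ) : Fin (2*m) → Fin (2*m) := fun c => ⟨tauN m c.val, by
  have := c.isLt; unfold tauN; split <;> omega⟩
def rhoF (m : ℕ) : Fin (2*m) → Fin (2*m) := fun c => ⟨rhoN m c.val, by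
  have := c.isLt; unfold rhoN; omega⟩

lemma sigF_sigIF (m : ℕ) (r : Fin (2*m)) : sigF m (sigIF m r) = r := by
  have := r.isLt
  simp only [sigF, sigIF, sigN, sigIN, Fin.ext_iff]
  split <;> split <;> omega

lemma sigIF_sigF (m : ℕ) (c : Fin (2*m)) : sigIF m (sigF m c) = c := by
  have := c.isLt
  simp only [sigF, sigIF, sigN, sigIN, Fin.ext_iff]
  split <;> split <;> omega

lemma tauF_tauF (m : ℕ) (c : Fin (2*m)) : tauF m (tauF m c) = c := by
  have := c.isLt
  simp only [tauF, tauN, Fin.ext_iff]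
  split <;> split <;> omega

lemma rhoF_rhoF (m : ℕ) (c : Fin (2*m)) : rhoF m (rhoF m c) = c := by
  have := c.isLt
  simp only [rhoF, rhoN, Fin.ext_iff]; omega

/-- permutation-style 0-1 matrix: 1 at (f c, c) -/
def Pmat {n : ℕ} (f : Fin n → Fin n) : Matrix (Fin n) (Fin n) ℂ :=
  Matrix.of fun r c => if r = f c then 1 else 0

lemma Pmat_mul_Pmat {n : ℕ} (f g : Fin n → Fin n) :
    Pmat f * Pmat g = Pmat (f ∘ g) := by
  ext r c
  rw [Matrix.mul_apply]
  rw [Finset.sum_eq_single (g c)]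
  · simp [Pmat]
  · intro x _ hx; simp [Pmat, hx]
  · simp
lemma Pmat_id {n : ℕ} : Pmat (id : Fin n → Fin n) = 1 := by
  ext r c
  simp [Pmat, Matrix.one_apply, eq_comm]

lemma Pmat_conjTranspose {n : ℕ} (f g : Fin n → Fin n)
    (hfg : ∀ x, f (g x) = x) (hgf : ∀ x, g (f x) = x) :
    (Pmat f)ᴴ = Pmat g := by
  ext r c
  simp only [conjTranspose_apply, Pmat, of_apply]
  have : (c = f r) ↔ (r = g c) := by
    constructor
    · intro h; rw [h, hgf]
    · intro h; rw [h, hfg]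
  split_ifs with h1 h2 h2
  · exact star_one ℂ
  · exact absurd (this.mp h1) h2
  · exact absurd (this.mpr h2) h1
  · exact star_zero ℂ

lemma mul_Pmat {n : ℕ} (M : Matrix (Fin n) (Fin n) ℂ) (f : Fin n → Fin n) :
    M * Pmat f = Matrix.of fun r c => M r (f c) := by
  ext r c
  rw [Matrix.mul_apply, Finset.sum_eq_single (f c)]
  · simp [Pmat]
  · intro x _ hx; simp [Pmat, hx]
  · simp

lemma Pmat_mul {n : ℕ} (M : Matrix (Fin n) (Fin n) ℂ) (f g : Fin n → Fin n)
    (hfg : ∀ x, f (g x) = x) (hgf : ∀ x, g (f x) = x) :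
    Pmat f * M = Matrix.of fun r c => M (g r) c := by
  ext r c
  rw [Matrix.mul_apply, Finset.sum_eq_single (g r)]
  · simp [Pmat, hfg]
  · intro x _ hx
    have : r ≠ f x := by
      intro h; exact hx (by rw [h, hgf])
    simp [Pmat, this]
  · simp

noncomputable def cinv : ℂ := (Real.sqrt 2 : ℂ)⁻¹

lemma cinv_sq : cinv * cinv * 2 = 1 := by
  have h : (Real.sqrt 2 : ℂ) * (Real.sqrt 2 : ℂ) = 2 := by
    rw [← Complex.ofReal_mul, Real.mul_self_sqrt (by norm_num : (0:ℝ) ≤ 2)]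
    norm_num
  unfold cinv
  rw [← mul_inv, h]
  norm_num

lemma conj_cinv : (starRingEnd ℂ) cinv = cinv := by
  unfold cinv
  rw [map_inv₀, Complex.conj_ofReal]

/- ### function composition identities -/
section funid
variable (m : ℕ)

lemma comp_sig_sigI : sigF m ∘ sigIF m = id := funext (sigF_sigIF m)
lemma comp_sigI_sig : sigIF m ∘ sigF m = id := funext (sigIF_sigF m)

lemma g1 : (sigIF m ∘ rhoF m) ∘ sigF m = rhoF m := by
  funext c; have := c.isLt
  simp only [Function.comp_apply, sigF, sigIF, rhoF, sigN, sigIN, rhoN, Fin.ext_iff]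
  split_ifs <;> omega

lemma g2 : (sigIF m ∘ rhoF m) ∘ (sigF m ∘ tauF m) = ((tauF m ∘ sigIF m) ∘ rhoF m) ∘ sigF m := by
  funext c; have := c.isLt
  simp only [Function.comp_apply, sigF, sigIF, rhoF, tauF, sigN, sigIN, rhoN, tauN, Fin.ext_iff]
  split_ifs <;> omega

lemma g3 : ((tauF m ∘ sigIF m) ∘ rhoF m) ∘ (sigF m ∘ tauF m) = rhoF m := by
  funext c; have := c.isLt
  simp only [Function.comp_apply, sigF, sigIF, rhoF, tauF, sigN, sigIN, rhoN, tauN, Fin.ext_iff]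
  split_ifs <;> omega

lemma g4 : (sigF m ∘ tauF m) ∘ (tauF m ∘ sigIF m) = id := by
  funext c; have := c.isLt
  simp only [Function.comp_apply, sigF, sigIF, tauF, sigN, sigIN, tauN, Fin.ext_iff, id_eq]
  split_ifs <;> omega

lemma st_inv1 : ∀ x, (sigF m ∘ tauF m) ((tauF m ∘ sigIF m) x) = x :=
  fun x => congrFun (g4 m) x

lemma st_inv2 : ∀ x, (tauF m ∘ sigIF m) ((sigF m ∘ tauF m) x) = x := by
  intro x; have := x.isLt
  simp only [Function.comp_apply, sigF, sigIF, tauF, sigN, sigIN, tauN, Fin.ext_iff]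
  split_ifs <;> omega

end funid

/- ### block matrices -/

noncomputable def bE (l : ℂ) (i j : ℕ) : ℂ :=
  if j = i then (l.re : ℂ)
  else if i % 2 = 0 ∧ j = i+1 then (l.im : ℂ)
  else if i % 2 = 1 ∧ j+1 = i then -(l.im : ℂ)
  else if j = i+2 then 1 else 0

noncomputable def jE (m : ℕ) (l : ℂ) (i j : ℕ) : ℂ :=
  if j = i then (if i < m then l else (starRingEnd ℂ) l)
  else if j = i+1 ∧ i+1 ≠ m then 1 else 0

noncomputable def Bblk (m : ℕ) (l : ℂ) : Matrix (Fin (2*m)) (Fin (2*m)) ℂ :=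
  Matrix.of fun i j => bE l (i:ℕ) (j:ℕ)

noncomputable def Jblk (m : ℕ) (l : ℂ) : Matrix (Fin (2*m)) (Fin (2*m)) ℂ :=
  Matrix.of fun i j => jE m l (i:ℕ) (j:ℕ)

noncomputable def Sblk (m : ℕ) : Matrix (Fin (2*m)) (Fin (2*m)) ℂ :=
  cinv • (Pmat (sigF m) + I • Pmat (sigF m ∘ tauF m))

noncomputable def Pblk (m : ℕ) : Matrix (Fin (2*m)) (Fin (2*m)) ℂ := Pmat (rhoF m)

lemma lf1 (l : ℂ) : (l.re:ℂ) + I * (l.im:ℂ) = l := by apply Complex.ext <;> simp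
lemma lf2 (l : ℂ) : -(l.im:ℂ) + I * (l.re:ℂ) = I * l := by apply Complex.ext <;> simp
lemma lf3 (l : ℂ) : (l.im:ℂ) + I * (l.re:ℂ) = I * (starRingEnd ℂ) l := by
  apply Complex.ext <;> simp
lemma lf4 (l : ℂ) : (l.re:ℂ) + I * -(l.im:ℂ) = (starRingEnd ℂ) l := by
  apply Complex.ext <;> simp

set_option maxHeartbeats 4000000 in
lemma key1 (m : ℕ) (l : ℂ) (r c : ℕ) (hr : r < 2*m) (hc : c < 2*m) :
    bE l r (sigN m c) + I * bE l r (sigN m (tauN m c)) =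
      jE m l (sigIN m r) c + I * jE m l (tauN m (sigIN m r)) c := by
  rcases Nat.lt_or_ge c m with hcm | hcm <;>
    rcases Nat.even_or_odd r with ⟨s, hs⟩ | ⟨s, hs⟩ <;> subst hs
  · have e1 : sigN m c = 2*c := if_pos hcm
    have e2 : tauN m c = c + m := if_pos hcm
    have e3 : sigN m (c + m) = 2*c+1 := by
      unfold sigN; rw [if_neg (by omega)]; congr 1; omega
    have e4 : sigIN m (s+s) = s := by unfold sigIN; rw [if_pos (by omega)]; omega
    have e5 : tauN m s = s + m := if_pos (by omega)
    rw [e1, e2, e3, e4, e5]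
    unfold bE jE
    split_ifs <;>
      first
        | (exfalso; omega)
        | ring1
        | linear_combination lf1 l
        | linear_combination lf2 l
        | linear_combination lf3 l
        | linear_combination lf4 l
  · have e1 : sigN m c = 2*c := if_pos hcm
    have e2 : tauN m c = c + m := if_pos hcm
    have e3 : sigN m (c + m) = 2*c+1 := by
      unfold sigN; rw [if_neg (by omega)]; congr 1; omega
    have e4 : sigIN m (2*s+1) = m + s := by unfold sigIN; rw [if_neg (by omega)]; omega
    have e5 : tauN m (m + s) = s := by unfold tauN; rw [if_neg (by omega)]; omega
    rw [e1, e2, e3, e4, e5]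
    unfold bE jE
    split_ifs <;>
      first
        | (exfalso; omega)
        | ring1
        | linear_combination lf1 l
        | linear_combination lf2 l
        | linear_combination lf3 l
        | linear_combination lf4 l
  · have e1 : sigN m c = 2*(c-m)+1 := if_neg (by omega)
    have e2 : tauN m c = c - m := if_neg (by omega)
    have e3 : sigN m (c - m) = 2*(c-m) := if_pos (by omega)
    have e4 : sigIN m (s+s) = s := by unfold sigIN; rw [if_pos (by omega)]; omega
    have e5 : tauN m s = s + m := if_pos (by omega)
    rw [e1, e2, e3, e4, e5]
    unfold bE jE
    split_ifs <;>
      first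
        | (exfalso; omega)
        | ring1
        | linear_combination lf1 l
        | linear_combination lf2 l
        | linear_combination lf3 l
        | linear_combination lf4 l
  · have e1 : sigN m c = 2*(c-m)+1 := if_neg (by omega)
    have e2 : tauN m c = c - m := if_neg (by omega)
    have e3 : sigN m (c - m) = 2*(c-m) := if_pos (by omega)
    have e4 : sigIN m (2*s+1) = m + s := by unfold sigIN; rw [if_neg (by omega)]; omega
    have e5 : tauN m (m + s) = s := by unfold tauN; rw [if_neg (by omega)]; omega
    rw [e1, e2, e3, e4, e5]
    unfold bE jE
    split_ifs <;>
      first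
        | (exfalso; omega)
        | ring1
        | linear_combination lf1 l
        | linear_combination lf2 l
        | linear_combination lf3 l
        | linear_combination lf4 l

lemma Sblk_conjTranspose (m : ℕ) :
    (Sblk m)ᴴ = cinv • (Pmat (sigIF m) + (-I) • Pmat (tauF m ∘ sigIF m)) := by
  unfold Sblk
  rw [Matrix.conjTranspose_smul, Matrix.conjTranspose_add, Matrix.conjTranspose_smul,
    Pmat_conjTranspose (sigF m) (sigIF m) (sigF_sigIF m) (sigIF_sigF m),
    Pmat_conjTranspose (sigF m ∘ tauF m) (tauF m ∘ sigIF m) (st_inv1 m) (st_inv2 m)]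
  simp [conj_cinv, Complex.conj_I]

lemma Pmat_comp_assoc {n : ℕ} (f g h : Fin n → Fin n) :
    Pmat ((f ∘ g) ∘ h) = Pmat (f ∘ (g ∘ h)) := rfl

/-- I3 : S * Sᴴ = 1 -/
lemma Sblk_mul_conjTranspose (m : ℕ) : Sblk m * (Sblk m)ᴴ = 1 := by
  rw [Sblk_conjTranspose]
  unfold Sblk
  simp only [Matrix.smul_mul, Matrix.mul_smul, Matrix.add_mul, Matrix.mul_add,
    Pmat_mul_Pmat]
  rw [comp_sig_sigI, g4, Pmat_id, Pmat_comp_assoc]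
  ext r c
  simp only [Matrix.smul_apply, Matrix.add_apply, Pmat, Matrix.of_apply,
    Matrix.one_apply, smul_eq_mul]
  split_ifs <;>
    first
      | ring1
      | linear_combination cinv_sq - (cinv*cinv) * Complex.I_mul_I

/-- I2 : Sᴴ * P * S = P -/
lemma Sblk_sip (m : ℕ) : (Sblk m)ᴴ * Pblk m * Sblk m = Pblk m := by
  rw [Sblk_conjTranspose]
  unfold Sblk Pblk
  simp only [Matrix.smul_mul, Matrix.mul_smul, Matrix.add_mul, Matrix.mul_add,
    Pmat_mul_Pmat]
  rw [← g2, g1, g3]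
  ext r c
  simp only [Matrix.smul_apply, Matrix.add_apply, Pmat, Matrix.of_apply, smul_eq_mul]
  split_ifs <;>
    first
      | ring1
      | linear_combination cinv_sq - (cinv*cinv) * Complex.I_mul_I


/-- I1 : B * S = S * J -/
lemma Bblk_mul_Sblk (m : ℕ) (l : ℂ) : Bblk m l * Sblk m = Sblk m * Jblk m l := by
  unfold Sblk
  rw [Matrix.mul_smul, Matrix.smul_mul, mul_add, add_mul, Matrix.mul_smul, Matrix.smul_mul,
    mul_Pmat, mul_Pmat,
    Pmat_mul (Jblk m l) (sigF m) (sigIF m) (sigF_sigIF m) (sigIF_sigF m),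
    Pmat_mul (Jblk m l) (sigF m ∘ tauF m) (tauF m ∘ sigIF m) (st_inv1 m) (st_inv2 m)]
  ext r c
  have hr := r.isLt
  have hc := c.isLt
  simp only [Matrix.smul_apply, Matrix.add_apply, Matrix.of_apply, smul_eq_mul,
    Bblk, Jblk, Function.comp_apply, sigF, sigIF, tauF]
  congr 1
  exact key1 m l r c hr hc

/-- i-conjugate-symmetry of the block S -/
lemma Sblk_ics (m : ℕ) (j : ℕ) (hj : j < m) (r : Fin (2*m)) :
    Sblk m r ⟨m + j, by omega⟩ = I * (starRingEnd ℂ) (Sblk m r ⟨j, by omega⟩) := by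
  have h1 : tauF m ⟨m+j, by omega⟩ = ⟨j, by omega⟩ := by
    apply Fin.ext; show tauN m (m+j) = j; unfold tauN; split <;> omega
  have h2 : tauF m ⟨j, by omega⟩ = ⟨m+j, by omega⟩ := by
    apply Fin.ext; show tauN m j = m + j; unfold tauN; split <;> omega
  simp only [Sblk, Matrix.smul_apply, Matrix.add_apply, Pmat, Matrix.of_apply,
    Function.comp_apply, h1, h2, smul_eq_mul]
  split_ifs <;>
    simp only [_root_.map_add, _root_.map_mul, _root_.map_one, _root_.map_zero,
      conj_cinv, Complex.conj_I] <;>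
    first
      | ring1
      | linear_combination cinv * Complex.I_mul_I
/- ### global matrices -/

noncomputable def JRblk (n : ℕ) (x : ℝ) : Matrix (Fin n) (Fin n) ℂ :=
  Matrix.of fun i j => if (j:ℕ) = (i:ℕ) then (x:ℂ) else if (j:ℕ) = (i:ℕ)+1 then 1 else 0

noncomputable def PRblk (n : ℕ) (e : ℝ) : Matrix (Fin n) (Fin n) ℂ :=
  Matrix.of fun i j => if (i:ℕ)+(j:ℕ) = n - 1 then (e:ℂ) else 0

section Glob
variable (α β' : ℕ) (p : Fin α → ℕ) (q : Fin β' → ℕ)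
  (μ : Fin α → ℝ) (lam : Fin β' → ℂ) (ε : Fin α → ℝ)

noncomputable def Sglob : Matrix (JordanIdx α β' p q) (JordanIdx α β' p q) ℂ :=
  Matrix.fromBlocks 1 0 0 (Matrix.blockDiagonal' fun k => Sblk (q k))

lemma realJordan_eq : realJordanForm α β' p q μ lam =
    Matrix.fromBlocks (Matrix.blockDiagonal' fun k => JRblk (p k) (μ k)) 0 0
      (Matrix.blockDiagonal' fun k => Bblk (q k) (lam k)) := by
  ext i j
  rcases i with ⟨k, i⟩ | ⟨k, i⟩ <;> rcases j with ⟨k', j⟩ | ⟨k', j⟩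
  · by_cases h : k = k'
    · subst h
      rw [Matrix.fromBlocks_apply₁₁, Matrix.blockDiagonal'_apply_eq]
      simp [realJordanForm, JRblk]
    · rw [Matrix.fromBlocks_apply₁₁, Matrix.blockDiagonal'_apply_ne _ _ _ h]
      simp [realJordanForm, h]
  · simp [realJordanForm]
  · simp [realJordanForm]
  · by_cases h : k = k'
    · subst h
      rw [Matrix.fromBlocks_apply₂₂, Matrix.blockDiagonal'_apply_eq]
      simp [realJordanForm, Bblk, bE]
    · rw [Matrix.fromBlocks_apply₂₂, Matrix.blockDiagonal'_apply_ne _ _ _ h]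
      simp [realJordanForm, h]

lemma complexJordan_eq : complexJordanForm α β' p q μ lam =
    Matrix.fromBlocks (Matrix.blockDiagonal' fun k => JRblk (p k) (μ k)) 0 0
      (Matrix.blockDiagonal' fun k => Jblk (q k) (lam k)) := by
  ext i j
  rcases i with ⟨k, i⟩ | ⟨k, i⟩ <;> rcases j with ⟨k', j⟩ | ⟨k', j⟩
  · by_cases h : k = k'
    · subst h
      rw [Matrix.fromBlocks_apply₁₁, Matrix.blockDiagonal'_apply_eq]
      simp [complexJordanForm, JRblk]
    · rw [Matrix.fromBlocks_apply₁₁, Matrix.blockDiagonal'_apply_ne _ _ _ h]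
      simp [complexJordanForm, h]
  · simp [complexJordanForm]
  · simp [complexJordanForm]
  · by_cases h : k = k'
    · subst h
      rw [Matrix.fromBlocks_apply₂₂, Matrix.blockDiagonal'_apply_eq]
      simp [complexJordanForm, Jblk, jE]
    · rw [Matrix.fromBlocks_apply₂₂, Matrix.blockDiagonal'_apply_ne _ _ _ h]
      simp [complexJordanForm, h]

lemma sip_eq : sipForm α β' p q ε =
    Matrix.fromBlocks (Matrix.blockDiagonal' fun k => PRblk (p k) (ε k)) 0 0
      (Matrix.blockDiagonal' fun k => Pblk (q k)) := by
  ext i j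
  rcases i with ⟨k, i⟩ | ⟨k, i⟩ <;> rcases j with ⟨k', j⟩ | ⟨k', j⟩
  · by_cases h : k = k'
    · subst h
      rw [Matrix.fromBlocks_apply₁₁, Matrix.blockDiagonal'_apply_eq]
      simp [sipForm, PRblk]
    · rw [Matrix.fromBlocks_apply₁₁, Matrix.blockDiagonal'_apply_ne _ _ _ h]
      simp [sipForm, h]
  · simp [sipForm]
  · simp [sipForm]
  · by_cases h : k = k'
    · subst h
      rw [Matrix.fromBlocks_apply₂₂, Matrix.blockDiagonal'_apply_eq]
      have hi := i.isLt
      have hj := j.isLt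
      simp only [sipForm, Matrix.of_apply, Pblk, Pmat, rhoF, rhoN, Fin.ext_iff, true_and,
        eq_self_iff_true, if_true]
      by_cases hij : (i:ℕ) + (j:ℕ) = 2 * q k - 1
      · rw [if_pos hij, if_pos (by omega)]
      · rw [if_neg hij, if_neg (by omega)]
    · rw [Matrix.fromBlocks_apply₂₂, Matrix.blockDiagonal'_apply_ne _ _ _ h]
      simp [sipForm, h]

end Glob

section Glob2
variable (α β' : ℕ) (p : Fin α → ℕ) (q : Fin β' → ℕ)
  (μ : Fin α → ℝ) (lam : Fin β' → ℂ) (ε : Fin α → ℝ)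

lemma Sglob_mul_conjTranspose :
    Sglob α β' p q * (Sglob α β' p q)ᴴ = 1 := by
  unfold Sglob
  rw [Matrix.fromBlocks_conjTranspose, Matrix.blockDiagonal'_conjTranspose,
    Matrix.fromBlocks_multiply, ← Matrix.blockDiagonal'_mul]
  simp only [Matrix.conjTranspose_one, Matrix.conjTranspose_zero, Matrix.mul_one,
    Matrix.one_mul, Matrix.mul_zero, Matrix.zero_mul, add_zero, zero_add,
    Sblk_mul_conjTranspose]
  rw [show (fun k : Fin β' => (1 : Matrix (Fin (2 * q k)) (Fin (2 * q k)) ℂ)) =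
      (1 : ∀ k : Fin β', Matrix (Fin (2 * q k)) (Fin (2 * q k)) ℂ) from rfl,
    Matrix.blockDiagonal'_one, Matrix.fromBlocks_one]

lemma G1 : realJordanForm α β' p q μ lam * Sglob α β' p q =
    Sglob α β' p q * complexJordanForm α β' p q μ lam := by
  rw [realJordan_eq, complexJordan_eq]
  unfold Sglob
  rw [Matrix.fromBlocks_multiply, Matrix.fromBlocks_multiply,
    ← Matrix.blockDiagonal'_mul, ← Matrix.blockDiagonal'_mul]
  simp only [Matrix.mul_one, Matrix.one_mul, Matrix.mul_zero, Matrix.zero_mul,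
    add_zero, zero_add, Bblk_mul_Sblk]

lemma G2 : (Sglob α β' p q)ᴴ * sipForm α β' p q ε * Sglob α β' p q =
    sipForm α β' p q ε := by
  rw [sip_eq]
  unfold Sglob
  rw [Matrix.fromBlocks_conjTranspose, Matrix.blockDiagonal'_conjTranspose,
    Matrix.fromBlocks_multiply, Matrix.fromBlocks_multiply]
  simp only [Matrix.conjTranspose_one, Matrix.conjTranspose_zero, Matrix.mul_one,
    Matrix.one_mul, Matrix.mul_zero, Matrix.zero_mul, add_zero, zero_add,
    ← Matrix.blockDiagonal'_mul, Sblk_sip]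

lemma Sglob_ics (k : Fin β') (j : ℕ) (hj : j < q k) (x : JordanIdx α β' p q) :
    Sglob α β' p q x (Sum.inr ⟨k, ⟨q k + j, by omega⟩⟩) =
      I * (starRingEnd ℂ) (Sglob α β' p q x (Sum.inr ⟨k, ⟨j, by omega⟩⟩)) := by
  unfold Sglob
  rcases x with a | ⟨k', r⟩
  · simp [Matrix.fromBlocks_apply₁₂]
  · rw [Matrix.fromBlocks_apply₂₂, Matrix.fromBlocks_apply₂₂]
    by_cases h : k' = k
    · subst h
      rw [Matrix.blockDiagonal'_apply_eq, Matrix.blockDiagonal'_apply_eq]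
      exact Sblk_ics (q k') j hj r
    · rw [Matrix.blockDiagonal'_apply_ne _ _ _ h, Matrix.blockDiagonal'_apply_ne _ _ _ h]
      simp

end Glob2

/-- Existence of an i-FOCS basis, assuming the real canonical form: if a real
`H`-selfadjoint matrix `A` (with `H` real symmetric invertible) is affiliated to
`(J_R, P)` via a real invertible matrix `R`, then there is a complex invertible `N`
affiliating `(A, H)` to `(J, P)` which is moreover `i`-conjugate symmetric: in each
non-real pair of blocks, the Jordan chain at `conj lam` is `i` times the entrywise
conjugate of the chain at `lam`. -/
theorem stmt18 (α β' : ℕ) (p : Fin α → ℕ) (q : Fin β' → ℕ)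
    (hp : ∀ k, 1 ≤ p k) (hq : ∀ k, 1 ≤ q k)
    (μ : Fin α → ℝ) (lam : Fin β' → ℂ) (hlam : ∀ k, (lam k).im ≠ 0)
    (ε : Fin α → ℝ) (hε : ∀ k, ε k = 1 ∨ ε k = -1)
    (A H : Matrix (JordanIdx α β' p q) (JordanIdx α β' p q) ℝ)
    (hH : H.IsSymm) (hHu : IsUnit H) (hsa : H * A = Aᵀ * H)
    (hRC : ∃ R : Matrix (JordanIdx α β' p q) (JordanIdx α β' p q) ℝ, IsUnit R ∧
      (R.map Complex.ofReal)⁻¹ * A.map Complex.ofReal * R.map Complex.ofReal =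
        realJordanForm α β' p q μ lam ∧
      (R.map Complex.ofReal)ᵀ * H.map Complex.ofReal * R.map Complex.ofReal =
        sipForm α β' p q ε) :
    ∃ N : Matrix (JordanIdx α β' p q) (JordanIdx α β' p q) ℂ, IsUnit N ∧
      N⁻¹ * A.map Complex.ofReal * N = complexJordanForm α β' p q μ lam ∧
      Nᴴ * H.map Complex.ofReal * N = sipForm α β' p q ε ∧
      ∀ (k : Fin β') (j : Fin (q k)) (i : JordanIdx α β' p q),
        N i (Sum.inr ⟨k, ⟨q k + (j:ℕ), by have := j.isLt; omega⟩⟩) =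
          I * (starRingEnd ℂ) (N i (Sum.inr ⟨k, ⟨(j:ℕ), by have := j.isLt; omega⟩⟩)) := by
  obtain ⟨R, hRu, h1, h2⟩ := hRC
  set Rc : Matrix (JordanIdx α β' p q) (JordanIdx α β' p q) ℂ := R.map Complex.ofReal with hRc
  have hRcu : IsUnit Rc := by
    have := hRu.map (Complex.ofRealHom.mapMatrix (m := JordanIdx α β' p q))
    exact this
  set Sg := Sglob α β' p q with hSg
  have hSS : Sg * Sgᴴ = 1 := Sglob_mul_conjTranspose α β' p q
  have hSdet : IsUnit Sg.det :=
    IsUnit.of_mul_eq_one (Sgᴴ).det (by rw [← Matrix.det_mul, hSS, Matrix.det_one])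
  have hSu : IsUnit Sg := (Matrix.isUnit_iff_isUnit_det _).mpr hSdet
  have hSiS : Sg⁻¹ * Sg = 1 := Matrix.nonsing_inv_mul _ hSdet
  have hRcH : Rcᴴ = Rcᵀ := by
    ext i j
    simp [hRc, Matrix.conjTranspose_apply, Matrix.transpose_apply, Matrix.map_apply,
      Complex.conj_ofReal]
  refine ⟨Rc * Sg, hRcu.mul hSu, ?_, ?_, ?_⟩
  · rw [Matrix.mul_inv_rev]
    have e : Sg⁻¹ * Rc⁻¹ * A.map Complex.ofReal * (Rc * Sg) =
        Sg⁻¹ * ((Rc⁻¹ * A.map Complex.ofReal * Rc) * Sg) := by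
      simp only [Matrix.mul_assoc]
    rw [e, h1, G1 α β' p q μ lam, ← Matrix.mul_assoc, hSiS, Matrix.one_mul]
  · rw [Matrix.conjTranspose_mul]
    have e : Sgᴴ * Rcᴴ * (H.map Complex.ofReal) * (Rc * Sg) =
        Sgᴴ * ((Rcᵀ * H.map Complex.ofReal * Rc) * Sg) := by
      rw [hRcH]; simp only [Matrix.mul_assoc]
    rw [e, h2, ← Matrix.mul_assoc]
    exact G2 α β' p q ε
  · intro k j i
    rw [Matrix.mul_apply, Matrix.mul_apply, map_sum, Finset.mul_sum]
    apply Finset.sum_congr rfl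
    intro x _
    simp only [hSg]
    rw [Sglob_ics α β' p q k (j:ℕ) j.isLt x, _root_.map_mul]
    have hx : (starRingEnd ℂ) (Rc i x) = Rc i x := by
      simp [hRc, Matrix.map_apply, Complex.conj_ofReal]
    rw [hx]; ring
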